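/- Let N ∈ {3,4,5} and ℓ ∈ (−1,1). Then for every t ∈ ℝ, ∫_{ℝ^N}|∇_x W_ℓ(t,x)|² dx = ((N+(1−N)ℓ²)/(N·√(1−ℓ²)))·∫_{ℝ^N}|∇W|² dx and ∫_{ℝ^N}(∂_t W_ℓ(t,x))² dx = (ℓ²/(N·√(1−ℓ²)))·∫_{ℝ^N}|∇W|² dx. -/

import Mathlib

open MeasureTheory Metric Filter Set

noncomputable section

/-- The ground state `W(x) = (1 + |x|²/(N(N-2)))^(-(N-2)/2)`. -/
def W (N : ℕ) (x : EuclideanSpace ℝ (Fin N)) : ℝ :=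
  (1 + ‖x‖ ^ 2 / ((N : ℝ) * ((N : ℝ) - 2))) ^ (-(((N : ℝ) - 2) / 2))

/-- The energy `E(v₀,v₁)`. -/
def energy (N : ℕ) (v₀ v₁ : EuclideanSpace ℝ (Fin N) → ℝ) : ℝ :=
  (1 / 2) * (∫ x, v₁ x ^ 2)
    + (1 / 2) * (∫ x, ‖gradient v₀ x‖ ^ 2)
    - ((N : ℝ) - 2) / (2 * (N : ℝ)) * (∫ x, |v₀ x| ^ (2 * (N : ℝ) / ((N : ℝ) - 2)))

/-- The first coordinate of a point of `ℝ^N`. -/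
def firstCoord {N : ℕ} (x : EuclideanSpace ℝ (Fin N)) : ℝ :=
  if h : 0 < N then x ⟨0, h⟩ else 0

/-- The Lorentz-transformed ground state `W_ℓ(t,x)`; the sum `x₂² + ⋯ + x_N²` is written
as `‖x‖² - x₁²`. -/
def Wl (N : ℕ) (ℓ : ℝ) (t : ℝ) (x : EuclideanSpace ℝ (Fin N)) : ℝ :=
  (1 + (firstCoord x - t * ℓ) ^ 2 / ((N : ℝ) * ((N : ℝ) - 2) * (1 - ℓ ^ 2))
     + (‖x‖ ^ 2 - firstCoord x ^ 2) / ((N : ℝ) * ((N : ℝ) - 2))) ^ (-(((N : ℝ) - 2) / 2))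

/-- The time derivative `∂ₜ W_ℓ(t,x)`. -/
def dtWl (N : ℕ) (ℓ : ℝ) (t : ℝ) (x : EuclideanSpace ℝ (Fin N)) : ℝ :=
  deriv (fun s => Wl N ℓ s x) t

/-- The second partial derivative `∂²f/∂xⱼ²` at `x`. -/
def d2 {N : ℕ} (f : EuclideanSpace ℝ (Fin N) → ℝ) (j : Fin N)
    (x : EuclideanSpace ℝ (Fin N)) : ℝ :=
  fderiv ℝ (fun y => fderiv ℝ f y (EuclideanSpace.single j 1)) x (EuclideanSpace.single j 1)

/-- auxiliary shape of the integrand for the space-gradient of `Wl`. -/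
def Hgrad (N : ℕ) (c2 : ℝ) (s w : ℝ) : ℝ :=
  (((N:ℝ)-2)/2)^2 * (1 + (s^2/c2 + w)/((N:ℝ)*((N:ℝ)-2))) ^ (-(N:ℝ))
    * (4/((N:ℝ)*((N:ℝ)-2))^2) * (s^2/c2^2 + w)

/-- auxiliary shape of the integrand for the time-derivative of `Wl`. -/
def Hdt (N : ℕ) (c2 ℓ : ℝ) (s w : ℝ) : ℝ :=
  ℓ^2 * (((N:ℝ)-2)/2)^2 * (1 + (s^2/c2 + w)/((N:ℝ)*((N:ℝ)-2))) ^ (-(N:ℝ))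
    * (4/((N:ℝ)*((N:ℝ)-2))^2) * (s^2/c2^2)


variable {N : ℕ}

variable {N : ℕ}

lemma norm_sq_eq_sum' (x : EuclideanSpace ℝ (Fin N)) : ‖x‖ ^ 2 = ∑ i, (x i) ^ 2 := by
  rw [EuclideanSpace.norm_eq, Real.sq_sqrt (by positivity)]
  simp [Real.norm_eq_abs, sq_abs]

lemma coord_sq_le (x : EuclideanSpace ℝ (Fin N)) (i : Fin N) : (x i) ^ 2 ≤ ‖x‖ ^ 2 := by
  rw [norm_sq_eq_sum']
  exact Finset.single_le_sum (fun j _ => sq_nonneg (x j)) (Finset.mem_univ i)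

/-- The linear equivalence of `ℝ^N` scaling the `i0`-th coordinate by `c ≠ 0`. -/
def scaleEquiv (i0 : Fin N) (c : ℝ) (hc : c ≠ 0) :
    EuclideanSpace ℝ (Fin N) ≃ₗ[ℝ] EuclideanSpace ℝ (Fin N) where
  toFun y := y + ((c - 1) * y i0) • EuclideanSpace.single i0 1
  invFun y := y + ((c⁻¹ - 1) * y i0) • EuclideanSpace.single i0 1
  map_add' y z := by
    ext j
    simp [EuclideanSpace.single_apply]
    split_ifs <;> ring
  map_smul' r y := by
    ext j
    simp [EuclideanSpace.single_apply]
    split_ifs <;> ring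
  left_inv y := by
    ext j
    simp [EuclideanSpace.single_apply]
    rcases eq_or_ne j i0 with h | h
    · subst h; simp; field_simp; ring
    · simp [h]
  right_inv y := by
    ext j
    simp [EuclideanSpace.single_apply]
    rcases eq_or_ne j i0 with h | h
    · subst h; simp; field_simp; ring
    · simp [h]

lemma scaleEquiv_apply (i0 : Fin N) (c : ℝ) (hc : c ≠ 0) (y : EuclideanSpace ℝ (Fin N)) (j : Fin N) :
    scaleEquiv i0 c hc y j = if j = i0 then c * y i0 else y j := by
  rcases eq_or_ne j i0 with h | h
  · subst h; simp [scaleEquiv, EuclideanSpace.single_apply]; ring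
  · simp [scaleEquiv, EuclideanSpace.single_apply, h]

lemma scaleEquiv_det (i0 : Fin N) (c : ℝ) (hc : c ≠ 0) :
    LinearMap.det ((scaleEquiv i0 c hc).toLinearMap) = c := by
  classical
  set b := (EuclideanSpace.basisFun (Fin N) ℝ).toBasis
  rw [← LinearMap.det_toMatrix b]
  have : LinearMap.toMatrix b b ((scaleEquiv i0 c hc).toLinearMap)
      = Matrix.diagonal (fun i => if i = i0 then c else 1) := by
    ext i j
    rw [LinearMap.toMatrix_apply]
    have hb : ∀ k, b.repr ((scaleEquiv i0 c hc).toLinearMap (b j)) k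
        = (scaleEquiv i0 c hc (b j)) k := fun k => rfl
    rw [hb]
    have hbj : (b j : EuclideanSpace ℝ (Fin N)) = EuclideanSpace.single j 1 := by
      simp [b, EuclideanSpace.basisFun_apply]
    rw [hbj, scaleEquiv_apply]
    simp [EuclideanSpace.single_apply, Matrix.diagonal]
    rcases eq_or_ne i i0 with h | h <;> rcases eq_or_ne i j with h2 | h2 <;>
      rcases eq_or_ne j i0 with h3 | h3 <;> simp_all
  rw [this, Matrix.det_diagonal]
  simp

lemma integral_scaleEquiv (i0 : Fin N) (c : ℝ) (hc : 0 < c)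
    (f : EuclideanSpace ℝ (Fin N) → ℝ) :
    ∫ x, f x = c * ∫ y, f (scaleEquiv i0 c hc.ne' y) := by
  set L := (scaleEquiv i0 c hc.ne').toContinuousLinearEquiv
  set e := L.toHomeomorph.toMeasurableEquiv
  have hdet : LinearMap.det ((scaleEquiv i0 c hc.ne').toLinearMap) = c := scaleEquiv_det _ _ _
  have hmap : Measure.map (⇑e) (volume : Measure (EuclideanSpace ℝ (Fin N)))
      = ENNReal.ofReal |c⁻¹| • volume := by
    have h := Measure.map_linearMap_addHaar_eq_smul_addHaar
      (volume : Measure (EuclideanSpace ℝ (Fin N)))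
      (f := ((scaleEquiv i0 c hc.ne').toLinearMap)) (by rw [hdet]; exact hc.ne')
    rw [hdet] at h
    have hcoe : (⇑e : EuclideanSpace ℝ (Fin N) → EuclideanSpace ℝ (Fin N))
        = ⇑((scaleEquiv i0 c hc.ne').toLinearMap) := rfl
    rw [hcoe]
    exact h
  have h1 : ∫ y, f (scaleEquiv i0 c hc.ne' y) = ∫ y, f (e y) := rfl
  rw [h1, ← integral_map_equiv e f, hmap, integral_smul_measure]
  rw [ENNReal.toReal_ofReal (by positivity), abs_of_pos (by positivity)]
  rw [smul_eq_mul, ← mul_assoc, mul_inv_cancel₀ hc.ne', one_mul]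
lemma norm_sq_sub_coord (i0 : Fin N) (x : EuclideanSpace ℝ (Fin N)) :
    ‖x‖ ^ 2 - (x i0) ^ 2 = ∑ j ∈ Finset.univ.erase i0, (x j) ^ 2 := by
  rw [norm_sq_eq_sum', ← Finset.add_sum_erase _ _ (Finset.mem_univ i0)]
  ring

lemma integral_translate_first (i0 : Fin N) (a : ℝ) (H : ℝ → ℝ → ℝ) :
    ∫ x : EuclideanSpace ℝ (Fin N), H (x i0 - a) (‖x‖ ^ 2 - (x i0) ^ 2)
      = ∫ x : EuclideanSpace ℝ (Fin N), H (x i0) (‖x‖ ^ 2 - (x i0) ^ 2) := by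
  rw [← integral_add_right_eq_self
    (fun x : EuclideanSpace ℝ (Fin N) => H (x i0 - a) (‖x‖ ^ 2 - (x i0) ^ 2))
    (a • EuclideanSpace.single i0 1)]
  congr 1
  ext x
  have h1 : (x + a • EuclideanSpace.single i0 1 : EuclideanSpace ℝ (Fin N)) i0 = x i0 + a := by
    simp [EuclideanSpace.single_apply]
  rw [norm_sq_sub_coord, norm_sq_sub_coord, h1]
  have h2 : ∑ j ∈ Finset.univ.erase i0,
        ((x + a • EuclideanSpace.single i0 1 : EuclideanSpace ℝ (Fin N)) j) ^ 2
      = ∑ j ∈ Finset.univ.erase i0, (x j) ^ 2 := by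
    refine Finset.sum_congr rfl fun j hj => ?_
    have : j ≠ i0 := Finset.ne_of_mem_erase hj
    simp [EuclideanSpace.single_apply, this]
  rw [h2]
  ring_nf

lemma integral_coord_sym (i j : Fin N) (G : ℝ → ℝ → ℝ) :
    ∫ x : EuclideanSpace ℝ (Fin N), G (x i) (‖x‖ ^ 2)
      = ∫ x : EuclideanSpace ℝ (Fin N), G (x j) (‖x‖ ^ 2) := by
  classical
  set σ := LinearIsometryEquiv.piLpCongrLeft 2 ℝ ℝ (Equiv.swap i j) with hσ
  have key := MeasureTheory.integral_comp
    (σ : EuclideanSpace ℝ (Fin N) ≃ₗᵢ[ℝ] EuclideanSpace ℝ (Fin N))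
    (fun x : EuclideanSpace ℝ (Fin N) => G (x j) (‖x‖ ^ 2))
  rw [← key]
  congr 1
  ext x
  have h1 : (σ x) j = x i := by
    simp [hσ, LinearIsometryEquiv.piLpCongrLeft_apply, Equiv.piCongrLeft'_apply,
      Equiv.swap_apply_right]
  have h2 : ‖σ x‖ = ‖x‖ := σ.norm_map x
  rw [h1, h2]

lemma hasGradientAt_of_inner {f : EuclideanSpace ℝ (Fin N) → ℝ}
    {D : EuclideanSpace ℝ (Fin N) →L[ℝ] ℝ} {v x : EuclideanSpace ℝ (Fin N)}
    (hf : HasFDerivAt f D x) (hD : ∀ w, D w = (inner ℝ v w : ℝ)) : HasGradientAt f v x := by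
  rw [hasGradientAt_iff_hasFDerivAt]
  have : (InnerProductSpace.toDual ℝ (EuclideanSpace ℝ (Fin N))) v = D := by
    ext w
    rw [InnerProductSpace.toDual_apply_apply, hD]
  rw [this]
  exact hf

lemma integrable_main (hN : 2 < N) {M : ℝ} (hM : 1 ≤ M) :
    Integrable (fun y : EuclideanSpace ℝ (Fin N) =>
      (1 + ‖y‖ ^ 2 / M) ^ (-(N : ℝ)) * ‖y‖ ^ 2) := by
  have hM0 : 0 < M := lt_of_lt_of_le one_pos hM
  have hN3 : (3 : ℝ) ≤ (N : ℝ) := by exact_mod_cast hN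
  have hnr : (Module.finrank ℝ (EuclideanSpace ℝ (Fin N)) : ℝ) < 2 * (N : ℝ) - 2 := by
    rw [finrank_euclideanSpace_fin]; linarith
  have hint := integrable_rpow_neg_one_add_norm_sq
    (E := EuclideanSpace ℝ (Fin N)) (μ := volume) hnr
  refine ((hint.const_mul (M ^ ((N : ℝ) - 1) * M)).mono' ?_
    (Filter.Eventually.of_forall fun y => ?_))
  · apply Continuous.aestronglyMeasurable
    apply Continuous.mul ?_ (by continuity)
    apply Continuous.rpow_const (by continuity)
    intro y
    left
    positivity
  · set s := ‖y‖ ^ 2 with hs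
    have hs0 : 0 ≤ s := by positivity
    have hB : (0:ℝ) < 1 + s / M := by positivity
    have e1 : (1 + s / M) ^ (-(N : ℝ)) = (1 + s / M) ^ (-((N:ℝ) - 1)) * (1 + s / M) ^ (-1 : ℝ) := by
      rw [← Real.rpow_add hB]; congr 1; ring
    have e2 : (1 + s / M) ^ (-1 : ℝ) * s ≤ M := by
      rw [Real.rpow_neg_one, inv_mul_le_iff₀ hB]
      nlinarith [div_mul_cancel₀ s hM0.ne']
    have e3 : (1 + s / M) ^ (-((N:ℝ) - 1)) ≤ M ^ ((N:ℝ) - 1) * (1 + s) ^ (-((N:ℝ)-1)) := by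
      have hle : (1 + s) / M ≤ 1 + s / M := by
        rw [div_le_iff₀ hM0, add_mul, one_mul]
        rw [div_mul_cancel₀ _ hM0.ne']
        linarith
      have h0 : (0:ℝ) < (1 + s) / M := by positivity
      have hmono := Real.rpow_le_rpow_of_nonpos h0 hle (by linarith : -((N:ℝ)-1) ≤ 0)
      refine le_trans hmono (le_of_eq ?_)
      rw [Real.div_rpow (by positivity) hM0.le, Real.rpow_neg hM0.le, div_eq_mul_inv, inv_inv]
      ring
    calc ‖(1 + s / M) ^ (-(N : ℝ)) * s‖
        = (1 + s / M) ^ (-((N:ℝ) - 1)) * ((1 + s / M) ^ (-1 : ℝ) * s) := by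
          rw [Real.norm_eq_abs, abs_of_nonneg (by positivity), e1]; ring
      _ ≤ (M ^ ((N:ℝ) - 1) * (1 + s) ^ (-((N:ℝ)-1))) * M := by
          apply mul_le_mul e3 e2 (by positivity) (by positivity)
      _ = M ^ ((N : ℝ) - 1) * M * (1 + s) ^ (-(2 * (N:ℝ) - 2) / 2) := by
          rw [show (-(2 * (N:ℝ) - 2) / 2) = -((N:ℝ)-1) by ring]; ring


lemma norm_sq_eq_sum'' (x : EuclideanSpace ℝ (Fin N)) : ‖x‖ ^ 2 = ∑ i, (x i) ^ 2 := by
  rw [EuclideanSpace.norm_eq, Real.sq_sqrt (by positivity)]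
  simp [Real.norm_eq_abs, sq_abs]

lemma coord_sq_le' (x : EuclideanSpace ℝ (Fin N)) (i : Fin N) : (x i) ^ 2 ≤ ‖x‖ ^ 2 := by
  rw [norm_sq_eq_sum'']
  exact Finset.single_le_sum (fun j _ => sq_nonneg (x j)) (Finset.mem_univ i)

lemma hasGradientAt_of_inner' {f : EuclideanSpace ℝ (Fin N) → ℝ}
    {D : EuclideanSpace ℝ (Fin N) →L[ℝ] ℝ} {v x : EuclideanSpace ℝ (Fin N)}
    (hf : HasFDerivAt f D x) (hD : ∀ w, D w = (inner ℝ v w : ℝ)) : HasGradientAt f v x := by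
  rw [hasGradientAt_iff_hasFDerivAt]
  have : (InnerProductSpace.toDual ℝ (EuclideanSpace ℝ (Fin N))) v = D := by
    ext w
    rw [InnerProductSpace.toDual_apply_apply, hD]
  rw [this]
  exact hf

lemma firstCoord_eq (h0 : 0 < N) (x : EuclideanSpace ℝ (Fin N)) :
    firstCoord x = x ⟨0, h0⟩ := by
  simp [firstCoord, h0]

lemma firstCoord_hasFDerivAt (h0 : 0 < N) (x : EuclideanSpace ℝ (Fin N)) :
    HasFDerivAt (fun y : EuclideanSpace ℝ (Fin N) => firstCoord y)
      (innerSL ℝ (EuclideanSpace.single (⟨0, h0⟩ : Fin N) (1:ℝ))) x := by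
  have : (fun y : EuclideanSpace ℝ (Fin N) => firstCoord y)
      = fun y => (innerSL ℝ (EuclideanSpace.single (⟨0, h0⟩ : Fin N) (1:ℝ))) y := by
    funext y
    rw [innerSL_apply_apply, EuclideanSpace.inner_single_left, firstCoord_eq h0]
    simp
  rw [this]
  exact (innerSL ℝ (EuclideanSpace.single (⟨0, h0⟩ : Fin N) (1:ℝ))).hasFDerivAt

/-- Pointwise formula for the squared norm of the gradient of `Wl`. -/
lemma gradWl_sq (hN : 2 < N) (ℓ t : ℝ) (hl : ℓ ^ 2 < 1) (x : EuclideanSpace ℝ (Fin N)) :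
    ‖gradient (Wl N ℓ t) x‖ ^ 2
      = Hgrad N (1 - ℓ^2) (firstCoord x - t*ℓ) (‖x‖^2 - (firstCoord x)^2) := by
  have h0 : 0 < N := by omega
  have hn3 : (3:ℝ) ≤ (N:ℝ) := by exact_mod_cast hN
  set n : ℝ := (N:ℝ) with hn
  set i0 : Fin N := ⟨0, h0⟩ with hi0
  set eb : EuclideanSpace ℝ (Fin N) := EuclideanSpace.single i0 (1:ℝ) with heb
  have hM : (0:ℝ) < n*(n-2) := by nlinarith
  have hc2 : (0:ℝ) < 1 - ℓ^2 := by linarith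
  set u : EuclideanSpace ℝ (Fin N) → ℝ := fun y =>
    1 + (firstCoord y - t * ℓ) ^ 2 / (n * (n - 2) * (1 - ℓ ^ 2))
      + (‖y‖ ^ 2 - firstCoord y ^ 2) / (n * (n - 2)) with hu
  have hWl : Wl N ℓ t = fun y => (u y) ^ (-((n - 2) / 2)) := rfl
  have hfc := firstCoord_hasFDerivAt h0 x
  have hc2' : (1 - ℓ ^ 2) ≠ 0 := hc2.ne'
  have hM' : n * (n - 2) ≠ 0 := hM.ne'
  have hBpos : 0 < u x := by
    have h1 : (firstCoord x) ^ 2 ≤ ‖x‖ ^ 2 := by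
      rw [firstCoord_eq h0]; exact coord_sq_le' x _
    have h2 : 0 ≤ (firstCoord x - t * ℓ) ^ 2 / (n * (n - 2) * (1 - ℓ ^ 2)) :=
      div_nonneg (sq_nonneg _) (by positivity)
    have h3 : 0 ≤ (‖x‖ ^ 2 - firstCoord x ^ 2) / (n * (n - 2)) :=
      div_nonneg (by linarith) hM.le
    rw [hu]; dsimp only; linarith
  -- build fderiv of u
  set k1 : ℝ := (n * (n - 2) * (1 - ℓ ^ 2))⁻¹ with hk1
  set k2 : ℝ := (n * (n - 2))⁻¹ with hk2
  have hueq : u = fun y => 1 + k1 * (firstCoord y - t * ℓ) ^ 2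
      + k2 * (‖y‖ ^ 2 - firstCoord y ^ 2) := by
    funext y
    rw [hu, hk1, hk2]
    ring
  have h2 : HasFDerivAt (fun y : EuclideanSpace ℝ (Fin N) => ‖y‖^2)
      (2 • innerSL ℝ x) x := (hasStrictFDerivAt_norm_sq x).hasFDerivAt
  have hsq1 : HasDerivAt (fun s : ℝ => s^2) (2*(firstCoord x - t*ℓ)) (firstCoord x - t*ℓ) := by
    simpa using hasDerivAt_pow 2 (firstCoord x - t*ℓ)
  have hsq2 : HasDerivAt (fun s : ℝ => s^2) (2*(firstCoord x)) (firstCoord x) := by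
    simpa using hasDerivAt_pow 2 (firstCoord x)
  have hA := ((((hsq1.comp_hasFDerivAt x (hfc.sub_const (t*ℓ)))).const_mul k1).const_add 1)
  have hB' := ((h2.sub (hsq2.comp_hasFDerivAt x hfc)).const_mul k2)
  have hu' : HasFDerivAt u (k1 • ((2 * (firstCoord x - t*ℓ)) • innerSL ℝ eb)
      + k2 • (2 • innerSL ℝ x - (2 * firstCoord x) • innerSL ℝ eb)) x := by
    rw [hueq]
    exact hA.add hB'
  have hrpow : HasDerivAt (fun s : ℝ => s ^ (-((n - 2) / 2)))
      (-((n - 2) / 2) * (u x) ^ (-((n - 2) / 2) - 1)) (u x) :=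
    Real.hasDerivAt_rpow_const (Or.inl hBpos.ne')
  have hcomp : HasFDerivAt (Wl N ℓ t)
      ((-((n - 2) / 2) * (u x) ^ (-((n - 2) / 2) - 1)) •
        (k1 • ((2 * (firstCoord x - t*ℓ)) • innerSL ℝ eb)
          + k2 • (2 • innerSL ℝ x - (2 * firstCoord x) • innerSL ℝ eb))) x := by
    rw [hWl]
    exact hrpow.comp_hasFDerivAt x hu'
  set C : ℝ := -((n - 2) / 2) * (u x) ^ (-((n - 2) / 2) - 1) with hC
  set α : ℝ := k1 * (2 * (firstCoord x - t*ℓ)) - k2 * (2 * firstCoord x) with hα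
  have hgrad : HasGradientAt (Wl N ℓ t) (C • (α • eb + (k2 * 2) • x)) x := by
    apply hasGradientAt_of_inner' hcomp
    intro w
    have hebw : (inner ℝ eb w : ℝ) = w i0 := by
      rw [heb, EuclideanSpace.inner_single_left]; simp
    simp only [ContinuousLinearMap.add_apply, ContinuousLinearMap.smul_apply,
      ContinuousLinearMap.sub_apply, innerSL_apply_apply, smul_eq_mul, nsmul_eq_mul,
      inner_add_left, real_inner_smul_left, hebw, hα]
    push_cast
    ring
  rw [hgrad.gradient]
  -- compute the squared norm
  have hnorm : ‖C • (α • eb + (k2 * 2) • x)‖^2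
      = C^2 * (α^2 + 2*α*(k2 * 2)*(firstCoord x) + (k2 * 2)^2 * ‖x‖^2) := by
    rw [norm_smul]
    rw [mul_pow, Real.norm_eq_abs, sq_abs]
    congr 1
    rw [← real_inner_self_eq_norm_sq, real_inner_add_add_self]
    have h1 : (inner ℝ (α • eb) (α • eb) : ℝ) = α^2 := by
      rw [real_inner_smul_left, real_inner_smul_right, real_inner_self_eq_norm_sq, heb,
        EuclideanSpace.norm_single]
      simp; ring
    have h2' : (inner ℝ (α • eb) ((k2 * 2) • x) : ℝ) = α * (k2 * 2) * firstCoord x := by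
      rw [real_inner_smul_left, real_inner_smul_right, heb, EuclideanSpace.inner_single_left,
        firstCoord_eq h0]
      simp; ring
    have h3 : (inner ℝ ((k2 * 2) • x) ((k2 * 2) • x) : ℝ) = (k2 * 2)^2 * ‖x‖^2 := by
      rw [real_inner_smul_left, real_inner_smul_right, real_inner_self_eq_norm_sq]; ring
    rw [h1, h2', h3]; ring
  rw [hnorm]
  -- match with Hgrad
  have hbase : u x = 1 + ((firstCoord x - t*ℓ)^2/(1-ℓ^2) + (‖x‖^2 - firstCoord x^2))/(n*(n-2)) := by
    rw [hu]; dsimp only; field_simp; ring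
  have hCsq : C^2 = ((n-2)/2)^2 * (1 + ((firstCoord x - t*ℓ)^2/(1-ℓ^2)
      + (‖x‖^2 - firstCoord x^2))/(n*(n-2))) ^ (-n) := by
    rw [hC, mul_pow, neg_sq]
    congr 1
    rw [sq, ← Real.rpow_add hBpos, hbase]
    congr 1
    ring
  rw [hCsq, Hgrad]
  have hquad : α^2 + 2*α*(k2 * 2)*(firstCoord x) + (k2 * 2)^2 * ‖x‖^2
      = (4/(n*(n-2))^2) * ((firstCoord x - t*ℓ)^2/(1-ℓ^2)^2 + (‖x‖^2 - firstCoord x^2)) := by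
    rw [hα, hk1, hk2]
    field_simp
    ring
  rw [hquad]
  ring


/-- Pointwise formula for the squared norm of the gradient of `W`. -/
lemma gradW_sq (hN : 2 < N) (x : EuclideanSpace ℝ (Fin N)) :
    ‖gradient (W N) x‖ ^ 2
      = (((N:ℝ)-2)/2)^2 * (1 + ‖x‖^2/((N:ℝ)*((N:ℝ)-2))) ^ (-(N:ℝ))
          * (4/((N:ℝ)*((N:ℝ)-2))^2) * ‖x‖^2 := by
  have hn3 : (3:ℝ) ≤ (N:ℝ) := by exact_mod_cast hN
  set n : ℝ := (N:ℝ) with hn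
  have hM : (0:ℝ) < n*(n-2) := by nlinarith
  have hM' : n * (n - 2) ≠ 0 := hM.ne'
  set u : EuclideanSpace ℝ (Fin N) → ℝ := fun y => 1 + ‖y‖ ^ 2 / (n * (n - 2)) with hu
  have hW : W N = fun y => (u y) ^ (-((n - 2) / 2)) := rfl
  have hBpos : 0 < u x := by
    have : 0 ≤ ‖x‖ ^ 2 / (n * (n - 2)) := div_nonneg (by positivity) hM.le
    rw [hu]; dsimp only; linarith
  set k2 : ℝ := (n * (n - 2))⁻¹ with hk2
  have hueq : u = fun y => 1 + k2 * ‖y‖ ^ 2 := by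
    funext y; rw [hu, hk2]; ring
  have h2 : HasFDerivAt (fun y : EuclideanSpace ℝ (Fin N) => ‖y‖^2)
      (2 • innerSL ℝ x) x := (hasStrictFDerivAt_norm_sq x).hasFDerivAt
  have hu' : HasFDerivAt u (k2 • (2 • innerSL ℝ x)) x := by
    rw [hueq]
    exact (h2.const_mul k2).const_add 1
  have hrpow : HasDerivAt (fun s : ℝ => s ^ (-((n - 2) / 2)))
      (-((n - 2) / 2) * (u x) ^ (-((n - 2) / 2) - 1)) (u x) :=
    Real.hasDerivAt_rpow_const (Or.inl hBpos.ne')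
  have hcomp : HasFDerivAt (W N)
      ((-((n - 2) / 2) * (u x) ^ (-((n - 2) / 2) - 1)) • (k2 • (2 • innerSL ℝ x))) x := by
    rw [hW]
    exact hrpow.comp_hasFDerivAt x hu'
  set C : ℝ := -((n - 2) / 2) * (u x) ^ (-((n - 2) / 2) - 1) with hC
  have hgrad : HasGradientAt (W N) (C • ((k2 * 2) • x)) x := by
    apply hasGradientAt_of_inner' hcomp
    intro w
    simp only [ContinuousLinearMap.smul_apply, innerSL_apply_apply, smul_eq_mul, nsmul_eq_mul,
      real_inner_smul_left]
    push_cast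
    ring
  rw [hgrad.gradient]
  have hnorm : ‖C • ((k2 * 2) • x)‖^2 = C^2 * (k2*2)^2 * ‖x‖^2 := by
    rw [norm_smul, norm_smul]
    simp [mul_pow, Real.norm_eq_abs, sq_abs]
    ring
  rw [hnorm]
  have hCsq : C^2 = ((n-2)/2)^2 * (1 + ‖x‖^2/(n*(n-2))) ^ (-n) := by
    rw [hC, mul_pow, neg_sq]
    congr 1
    rw [sq, ← Real.rpow_add hBpos]
    congr 1
    ring
  rw [hCsq, hk2]
  field_simp
  ring

/-- Pointwise formula for the square of the time derivative of `Wl`. -/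
lemma dtWl_sq (hN : 2 < N) (ℓ t : ℝ) (hl : ℓ ^ 2 < 1) (x : EuclideanSpace ℝ (Fin N)) :
    (dtWl N ℓ t x) ^ 2
      = Hdt N (1 - ℓ^2) ℓ (firstCoord x - t*ℓ) (‖x‖^2 - (firstCoord x)^2) := by
  have h0 : 0 < N := by omega
  have hn3 : (3:ℝ) ≤ (N:ℝ) := by exact_mod_cast hN
  set n : ℝ := (N:ℝ) with hn
  have hM : (0:ℝ) < n*(n-2) := by nlinarith
  have hc2 : (0:ℝ) < 1 - ℓ^2 := by linarith
  have hM' : n * (n - 2) ≠ 0 := hM.ne'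
  have hc2' : (1 - ℓ ^ 2) ≠ 0 := hc2.ne'
  set v : ℝ → ℝ := fun s =>
    1 + (firstCoord x - s * ℓ) ^ 2 / (n * (n - 2) * (1 - ℓ ^ 2))
      + (‖x‖ ^ 2 - firstCoord x ^ 2) / (n * (n - 2)) with hv
  have hg : (fun s => Wl N ℓ s x) = fun s => (v s) ^ (-((n - 2) / 2)) := rfl
  have hBpos : 0 < v t := by
    have h1 : (firstCoord x) ^ 2 ≤ ‖x‖ ^ 2 := by
      rw [firstCoord_eq h0]; exact coord_sq_le' x _
    have h2 : 0 ≤ (firstCoord x - t * ℓ) ^ 2 / (n * (n - 2) * (1 - ℓ ^ 2)) :=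
      div_nonneg (sq_nonneg _) (by positivity)
    have h3 : 0 ≤ (‖x‖ ^ 2 - firstCoord x ^ 2) / (n * (n - 2)) :=
      div_nonneg (by linarith) hM.le
    rw [hv]; dsimp only; linarith
  set k1 : ℝ := (n * (n - 2) * (1 - ℓ ^ 2))⁻¹ with hk1
  set k2 : ℝ := (n * (n - 2))⁻¹ with hk2
  have hveq : v = fun s => (1 + k1 * (firstCoord x - s * ℓ) ^ 2)
      + k2 * (‖x‖ ^ 2 - firstCoord x ^ 2) := by
    funext s; rw [hv, hk1, hk2]; ring
  have hlin : HasDerivAt (fun s : ℝ => firstCoord x - s * ℓ) (-ℓ) t := by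
    simpa using (hasDerivAt_mul_const (x := t) ℓ).const_sub (firstCoord x)
  have hq := hlin.pow 2
  have hv' : HasDerivAt v (k1 * ((2:ℕ) * (firstCoord x - t * ℓ) ^ 1 * -ℓ)) t := by
    rw [hveq]
    exact ((hq.const_mul k1).const_add 1).add_const (k2 * (‖x‖ ^ 2 - firstCoord x ^ 2))
  have hrpow : HasDerivAt (fun s : ℝ => s ^ (-((n - 2) / 2)))
      (-((n - 2) / 2) * (v t) ^ (-((n - 2) / 2) - 1)) (v t) :=
    Real.hasDerivAt_rpow_const (Or.inl hBpos.ne')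
  have hcomp : HasDerivAt (fun s => Wl N ℓ s x)
      ((-((n - 2) / 2) * (v t) ^ (-((n - 2) / 2) - 1))
        * (k1 * ((2:ℕ) * (firstCoord x - t * ℓ) ^ 1 * -ℓ))) t := by
    rw [hg]
    exact hrpow.comp t hv'
  have hd : dtWl N ℓ t x = (-((n - 2) / 2) * (v t) ^ (-((n - 2) / 2) - 1))
      * (k1 * ((2:ℕ) * (firstCoord x - t * ℓ) ^ 1 * -ℓ)) := hcomp.deriv
  rw [hd]
  have hbase : v t = 1 + ((firstCoord x - t*ℓ)^2/(1-ℓ^2)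
      + (‖x‖^2 - firstCoord x^2))/(n*(n-2)) := by
    rw [hv]; dsimp only; field_simp; ring
  have hsq : ((v t) ^ (-((n - 2) / 2) - 1))^2 = (1 + ((firstCoord x - t*ℓ)^2/(1-ℓ^2)
      + (‖x‖^2 - firstCoord x^2))/(n*(n-2))) ^ (-n) := by
    rw [sq, ← Real.rpow_add hBpos, hbase]
    congr 1
    ring
  rw [Hdt]
  rw [mul_pow, mul_pow, neg_sq, hsq, hk1]
  push_cast
  rw [← hn]
  generalize (1 + ((firstCoord x - t*ℓ)^2/(1-ℓ^2) + (‖x‖^2 - firstCoord x^2))/(n*(n-2))) ^ (-n) = P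
  field_simp
  ring
variable {N : ℕ}

lemma integral_cov (i0 : Fin N) (a : ℝ) {c : ℝ} (hc : 0 < c) (H : ℝ → ℝ → ℝ) :
    ∫ x : EuclideanSpace ℝ (Fin N), H (x i0 - a) (‖x‖ ^ 2 - (x i0) ^ 2)
      = c * ∫ y : EuclideanSpace ℝ (Fin N), H (c * y i0) (‖y‖ ^ 2 - (y i0) ^ 2) := by
  rw [integral_translate_first i0 a H]
  rw [integral_scaleEquiv i0 c hc (fun x => H (x i0) (‖x‖ ^ 2 - (x i0) ^ 2))]
  congr 1
  refine integral_congr_ae (Filter.Eventually.of_forall fun y => ?_)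
  have h1 : (scaleEquiv i0 c hc.ne' y) i0 = c * y i0 := by
    rw [scaleEquiv_apply]; simp
  have h2 : ‖scaleEquiv i0 c hc.ne' y‖ ^ 2 - ((scaleEquiv i0 c hc.ne' y) i0) ^ 2
      = ‖y‖ ^ 2 - (y i0) ^ 2 := by
    rw [norm_sq_sub_coord, norm_sq_sub_coord]
    refine Finset.sum_congr rfl fun j hj => ?_
    have hji : j ≠ i0 := Finset.ne_of_mem_erase hj
    rw [scaleEquiv_apply]
    simp [hji]
  dsimp only
  rw [← h1, h2]


/-- The integrand `|∇W|²` in explicit form. -/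
def Phi (N : ℕ) (y : EuclideanSpace ℝ (Fin N)) : ℝ :=
  (((N:ℝ)-2)/2)^2 * (1 + ‖y‖^2/((N:ℝ)*((N:ℝ)-2))) ^ (-(N:ℝ))
    * (4/((N:ℝ)*((N:ℝ)-2))^2) * ‖y‖^2

/-- A single coordinate's contribution to `Phi`. -/
def Psi (N : ℕ) (i : Fin N) (y : EuclideanSpace ℝ (Fin N)) : ℝ :=
  (((N:ℝ)-2)/2)^2 * (1 + ‖y‖^2/((N:ℝ)*((N:ℝ)-2))) ^ (-(N:ℝ))
    * (4/((N:ℝ)*((N:ℝ)-2))^2) * (y i)^2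

lemma M_facts (hN : 2 < N) : (1:ℝ) ≤ (N:ℝ)*((N:ℝ)-2) ∧ (0:ℝ) < (N:ℝ)*((N:ℝ)-2) := by
  have hn3 : (3:ℝ) ≤ (N:ℝ) := by exact_mod_cast hN
  constructor <;> nlinarith

lemma integrable_Phi (hN : 2 < N) : Integrable (Phi N) := by
  obtain ⟨hM1, hM⟩ := M_facts (N := N) hN
  have h := (integrable_main hN hM1).const_mul ((((N:ℝ)-2)/2)^2 * (4/((N:ℝ)*((N:ℝ)-2))^2))
  have he : (fun y : EuclideanSpace ℝ (Fin N) => (((N:ℝ)-2)/2)^2 * (4/((N:ℝ)*((N:ℝ)-2))^2)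
      * ((1 + ‖y‖^2/((N:ℝ)*((N:ℝ)-2))) ^ (-(N:ℝ)) * ‖y‖^2)) = Phi N := by
    funext y; simp only [Phi]; ring
  rwa [he] at h

lemma Psi_nonneg (hN : 2 < N) (i : Fin N) (y : EuclideanSpace ℝ (Fin N)) : 0 ≤ Psi N i y := by
  obtain ⟨hM1, hM⟩ := M_facts (N := N) hN
  have hb : (0:ℝ) ≤ 1 + ‖y‖^2/((N:ℝ)*((N:ℝ)-2)) := by
    have : 0 ≤ ‖y‖^2/((N:ℝ)*((N:ℝ)-2)) := div_nonneg (by positivity) hM.le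
    linarith
  exact mul_nonneg (mul_nonneg (mul_nonneg (sq_nonneg _) (Real.rpow_nonneg hb _))
    (by positivity)) (sq_nonneg _)

lemma Psi_le_Phi (hN : 2 < N) (i : Fin N) (y : EuclideanSpace ℝ (Fin N)) :
    Psi N i y ≤ Phi N y := by
  obtain ⟨hM1, hM⟩ := M_facts (N := N) hN
  have hb : (0:ℝ) ≤ 1 + ‖y‖^2/((N:ℝ)*((N:ℝ)-2)) := by
    have : 0 ≤ ‖y‖^2/((N:ℝ)*((N:ℝ)-2)) := div_nonneg (by positivity) hM.le
    linarith
  exact mul_le_mul_of_nonneg_left (coord_sq_le' y i)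
    (mul_nonneg (mul_nonneg (sq_nonneg _) (Real.rpow_nonneg hb _)) (by positivity))

lemma continuous_Psi (hN : 2 < N) (i : Fin N) : Continuous (Psi N i) := by
  obtain ⟨hM1, hM⟩ := M_facts (N := N) hN
  apply Continuous.mul
  apply Continuous.mul
  apply Continuous.mul continuous_const
  · apply Continuous.rpow_const (by continuity)
    intro y
    left
    have : 0 ≤ ‖y‖^2/((N:ℝ)*((N:ℝ)-2)) := div_nonneg (by positivity) hM.le
    positivity
  · exact continuous_const
  · have : Continuous (fun y : EuclideanSpace ℝ (Fin N) => y i) :=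
      (continuous_apply i).comp (PiLp.continuous_ofLp 2 _)
    exact (this.pow 2)

lemma integrable_Psi (hN : 2 < N) (i : Fin N) : Integrable (Psi N i) := by
  refine (integrable_Phi hN).mono' (continuous_Psi hN i).aestronglyMeasurable
    (Filter.Eventually.of_forall fun y => ?_)
  rw [Real.norm_eq_abs, abs_of_nonneg (Psi_nonneg hN i y)]
  exact Psi_le_Phi hN i y

lemma integral_Psi_eq (i j : Fin N) : ∫ y, Psi N i y = ∫ y, Psi N j y :=
  integral_coord_sym i j (fun u v => (((N:ℝ)-2)/2)^2 * (1 + v/((N:ℝ)*((N:ℝ)-2))) ^ (-(N:ℝ))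
    * (4/((N:ℝ)*((N:ℝ)-2))^2) * u^2)

lemma integral_Phi_eq (hN : 2 < N) (i0 : Fin N) :
    ∫ y, Phi N y = (N:ℝ) * ∫ y, Psi N i0 y := by
  have hsum : ∀ y : EuclideanSpace ℝ (Fin N), Phi N y = ∑ i, Psi N i y := by
    intro y
    simp only [Psi, ← Finset.mul_sum]
    rw [← norm_sq_eq_sum' y]
    rfl
  calc ∫ y, Phi N y = ∫ y : EuclideanSpace ℝ (Fin N), ∑ i, Psi N i y := by
        refine integral_congr_ae (Filter.Eventually.of_forall fun y => hsum y)
    _ = ∑ i, ∫ y, Psi N i y :=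
        integral_finset_sum Finset.univ (fun i _ => integrable_Psi hN i)
    _ = ∑ _i : Fin N, ∫ y, Psi N i0 y :=
        Finset.sum_congr rfl fun i _ => integral_Psi_eq i i0
    _ = (N:ℝ) * ∫ y, Psi N i0 y := by
        rw [Finset.sum_const, Finset.card_univ, Fintype.card_fin, nsmul_eq_mul]

lemma Hgrad_pt (hN : 2 < N) {ℓ c : ℝ} (hl : ℓ^2 < 1) (hc : c^2 = 1 - ℓ^2) (i0 : Fin N)
    (y : EuclideanSpace ℝ (Fin N)) :
    Hgrad N (1-ℓ^2) (c * y i0) (‖y‖^2 - (y i0)^2)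
      = (1/(1-ℓ^2) - 1) * Psi N i0 y + Phi N y := by
  obtain ⟨hM1, hM⟩ := M_facts (N := N) hN
  have hc2 : (0:ℝ) < 1 - ℓ^2 := by linarith
  simp only [Hgrad, Psi, Phi]
  have hcc : (c*y i0)^2 = (1-ℓ^2) * (y i0)^2 := by rw [mul_pow, hc]
  have hb : 1 + ((c*y i0)^2/(1-ℓ^2) + (‖y‖^2-(y i0)^2))/((N:ℝ)*((N:ℝ)-2))
      = 1 + ‖y‖^2/((N:ℝ)*((N:ℝ)-2)) := by
    rw [hcc]
    field_simp
    ring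
  rw [hb, hcc]
  field_simp
  ring

lemma Hdt_pt (hN : 2 < N) {ℓ c : ℝ} (hl : ℓ^2 < 1) (hc : c^2 = 1 - ℓ^2) (i0 : Fin N)
    (y : EuclideanSpace ℝ (Fin N)) :
    Hdt N (1-ℓ^2) ℓ (c * y i0) (‖y‖^2 - (y i0)^2) = (ℓ^2/(1-ℓ^2)) * Psi N i0 y := by
  obtain ⟨hM1, hM⟩ := M_facts (N := N) hN
  have hc2 : (0:ℝ) < 1 - ℓ^2 := by linarith
  simp only [Hdt, Psi]
  have hcc : (c*y i0)^2 = (1-ℓ^2) * (y i0)^2 := by rw [mul_pow, hc]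
  have hb : 1 + ((c*y i0)^2/(1-ℓ^2) + (‖y‖^2-(y i0)^2))/((N:ℝ)*((N:ℝ)-2))
      = 1 + ‖y‖^2/((N:ℝ)*((N:ℝ)-2)) := by
    rw [hcc]
    field_simp
    ring
  rw [hb, hcc]
  field_simp

/-- Claim 2.3, first line: the kinetic quantities of the solitary wave `W_ℓ`. -/
theorem stmt2 (N : ℕ) (hN : N = 3 ∨ N = 4 ∨ N = 5)
    (ℓ : ℝ) (hℓ : ℓ ∈ Set.Ioo (-1 : ℝ) 1) (t : ℝ) :
    (∫ x, ‖gradient (Wl N ℓ t) x‖ ^ 2)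
        = (((N : ℝ) + (1 - (N : ℝ)) * ℓ ^ 2) / ((N : ℝ) * Real.sqrt (1 - ℓ ^ 2)))
            * (∫ x, ‖gradient (W N) x‖ ^ 2)
      ∧ (∫ x, dtWl N ℓ t x ^ 2)
        = (ℓ ^ 2 / ((N : ℝ) * Real.sqrt (1 - ℓ ^ 2)))
            * (∫ x, ‖gradient (W N) x‖ ^ 2) := by
  have hN2 : 2 < N := by rcases hN with h|h|h <;> omega
  obtain ⟨hl1, hl2⟩ := hℓ
  have hl : ℓ^2 < 1 := by nlinarith
  have h0 : 0 < N := by omega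
  set i0 : Fin N := ⟨0, h0⟩ with hi0
  obtain ⟨hM1, hM⟩ := M_facts (N := N) hN2
  have hc2 : (0:ℝ) < 1 - ℓ^2 := by linarith
  set c : ℝ := Real.sqrt (1-ℓ^2) with hcdef
  have hc : 0 < c := Real.sqrt_pos.2 hc2
  have hcsq : c^2 = 1-ℓ^2 := Real.sq_sqrt hc2.le
  set K : ℝ := ∫ y, Psi N i0 y with hK
  -- the W-energy
  have hWint : ∫ x, ‖gradient (W N) x‖ ^ 2 = (N:ℝ) * K := by
    have he : (fun x : EuclideanSpace ℝ (Fin N) => ‖gradient (W N) x‖ ^ 2) = Phi N := by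
      funext x
      rw [gradW_sq hN2 x]
      rfl
    rw [he, integral_Phi_eq hN2 i0]
  -- the Wl-gradient term
  have hWlint : ∫ x, ‖gradient (Wl N ℓ t) x‖ ^ 2
      = c * ((1/(1-ℓ^2) - 1) * K + (N:ℝ) * K) := by
    have he : (fun x : EuclideanSpace ℝ (Fin N) => ‖gradient (Wl N ℓ t) x‖ ^ 2)
        = fun x => Hgrad N (1-ℓ^2) (x i0 - t*ℓ) (‖x‖^2 - (x i0)^2) := by
      funext x
      rw [gradWl_sq hN2 ℓ t hl x, firstCoord_eq h0, ← hi0]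
    rw [he, integral_cov i0 (t*ℓ) hc (Hgrad N (1-ℓ^2))]
    congr 1
    have he2 : (fun y : EuclideanSpace ℝ (Fin N) =>
        Hgrad N (1-ℓ^2) (c * y i0) (‖y‖^2 - (y i0)^2))
        = fun y => (1/(1-ℓ^2) - 1) * Psi N i0 y + Phi N y := by
      funext y
      exact Hgrad_pt hN2 hl hcsq i0 y
    rw [he2, integral_add ((integrable_Psi hN2 i0).const_mul _) (integrable_Phi hN2),
      integral_const_mul, integral_Phi_eq hN2 i0, ← hK]
  -- the time-derivative term
  have hdtint : ∫ x, dtWl N ℓ t x ^ 2 = c * ((ℓ^2/(1-ℓ^2)) * K) := by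
    have he : (fun x : EuclideanSpace ℝ (Fin N) => dtWl N ℓ t x ^ 2)
        = fun x => Hdt N (1-ℓ^2) ℓ (x i0 - t*ℓ) (‖x‖^2 - (x i0)^2) := by
      funext x
      rw [dtWl_sq hN2 ℓ t hl x, firstCoord_eq h0, ← hi0]
    rw [he, integral_cov i0 (t*ℓ) hc (Hdt N (1-ℓ^2) ℓ)]
    congr 1
    have he2 : (fun y : EuclideanSpace ℝ (Fin N) =>
        Hdt N (1-ℓ^2) ℓ (c * y i0) (‖y‖^2 - (y i0)^2))
        = fun y => (ℓ^2/(1-ℓ^2)) * Psi N i0 y := by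
      funext y
      exact Hdt_pt hN2 hl hcsq i0 y
    rw [he2, integral_const_mul, ← hK]
  have hn0 : (N:ℝ) ≠ 0 := by positivity
  have hlsub : ℓ^2 = 1 - c^2 := by nlinarith [hcsq]
  constructor
  · rw [hWlint, hWint, hlsub]
    field_simp
    ring
  · rw [hdtint, hWint, hlsub]
    field_simp
    ring

end
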